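/- (Derivative inequality in the proof of Theorem 7.1) Along the modified error dynamics with time-varying uncertainty and projection-based update law, for all t ≥ 0, d/dt V*(e(t), W̃(t), e_L(t), x̃(t)) ≤ −c₁ ‖e(t)‖₂² − c₂ ‖e_L(t)‖₂² − c₃ ‖x̃(t)‖₂² + c₄. -/

import Mathlib

open Matrix Filter

noncomputable section

/-- Euclidean norm ‖·‖₂ of a vector. -/
def norm2 {n : ℕ} (v : Fin n → ℝ) : ℝ := Real.sqrt (∑ i, v i ^ 2)

/-- Supremum (infinity) norm ‖·‖_∞ of a vector (the sup norm on `Fin n → ℝ`). -/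
def normInf {n : ℕ} (v : Fin n → ℝ) : ℝ := ‖v‖

/-- Frobenius norm ‖·‖_F of a matrix. -/
def normF {N m : ℕ} (W : Matrix (Fin N) (Fin m) ℝ) : ℝ := Real.sqrt (∑ i, ∑ j, W i j ^ 2)

/-- Smallest eigenvalue λ_min of a real symmetric (Hermitian) matrix. -/
def lamMin {n : ℕ} {A : Matrix (Fin n) (Fin n) ℝ} (hA : A.IsHermitian) : ℝ := ⨅ i, hA.eigenvalues i

/-- Largest eigenvalue λ_max of a real symmetric (Hermitian) matrix. -/
def lamMax {n : ℕ} {A : Matrix (Fin n) (Fin n) ℝ} (hA : A.IsHermitian) : ℝ := ⨆ i, hA.eigenvalues i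

/-- A real square matrix is Hurwitz if every (complex) eigenvalue has negative real part. -/
def Hurwitz {n : ℕ} (A : Matrix (Fin n) (Fin n) ℝ) : Prop :=
  ∀ μ : ℂ, (A.map Complex.ofReal).charpoly.IsRoot μ → μ.re < 0

/-- The Lyapunov function V(e, W̃) = eᵀ P e + γ⁻¹ tr((W̃ Λ^{1/2})ᵀ (W̃ Λ^{1/2})). -/
def Vlyap {n N m : ℕ} (γ : ℝ) (P : Matrix (Fin n) (Fin n) ℝ)
    (Lhalf : Matrix (Fin m) (Fin m) ℝ) (e : Fin n → ℝ) (W : Matrix (Fin N) (Fin m) ℝ) : ℝ :=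
  e ⬝ᵥ (P *ᵥ e) + γ⁻¹ * ((W * Lhalf)ᵀ * (W * Lhalf)).trace

/-- The augmented Lyapunov function V* of Theorem 5.1. -/
def Vstar {n N m : ℕ} (γ κ η ξ : ℝ) (P R : Matrix (Fin n) (Fin n) ℝ)
    (hP : P.IsHermitian) (hR : R.IsHermitian)
    (Lhalf : Matrix (Fin m) (Fin m) ℝ)
    (e : Fin n → ℝ) (W : Matrix (Fin N) (Fin m) ℝ) (eL xt : Fin n → ℝ) : ℝ :=
  Vlyap γ P Lhalf e W + η⁻¹ * κ * (eL ⬝ᵥ (P *ᵥ eL))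
    + 2 * ξ * κ⁻¹ * (lamMax hP)⁻¹ * lamMin hR * (xt ⬝ᵥ (P *ᵥ xt))

/-! ### Auxiliary lemmas -/

private lemma hasDerivAt_comp_pi {n : ℕ} {f : ℝ → Fin n → ℝ} {v : Fin n → ℝ} {t : ℝ}
    (hf : HasDerivAt f v t) (i : Fin n) : HasDerivAt (fun s => f s i) (v i) t := by
  exact hasDerivAt_pi.1 hf i

private lemma hasDerivAt_quadForm {n : ℕ} (P : Matrix (Fin n) (Fin n) ℝ)
    {f : ℝ → Fin n → ℝ} {v : Fin n → ℝ} {t : ℝ} (hf : HasDerivAt f v t) :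
    HasDerivAt (fun s => f s ⬝ᵥ (P *ᵥ f s)) (v ⬝ᵥ (P *ᵥ f t) + f t ⬝ᵥ (P *ᵥ v)) t := by
  have h : ∀ i, HasDerivAt (fun s => f s i) (v i) t := hasDerivAt_comp_pi hf
  have H : HasDerivAt (fun s => ∑ i, f s i * ∑ j, P i j * f s j)
      (∑ i, (v i * ∑ j, P i j * f t j + f t i * ∑ j, P i j * v j)) t := by
    refine HasDerivAt.fun_sum fun i _ => ?_
    exact (h i).mul (HasDerivAt.fun_sum fun j _ => (h j).const_mul (P i j))
  have e1 : (fun s => f s ⬝ᵥ (P *ᵥ f s)) = fun s => ∑ i, f s i * ∑ j, P i j * f s j := by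
    funext s; simp [dotProduct, Matrix.mulVec]
  rw [e1]
  convert H using 1
  simp [dotProduct, Matrix.mulVec, Finset.sum_add_distrib]

private lemma hasDerivAt_traceQuad {N m : ℕ} (Lhalf : Matrix (Fin m) (Fin m) ℝ)
    {Wt : ℝ → Matrix (Fin N) (Fin m) ℝ} {Wd : Matrix (Fin N) (Fin m) ℝ} {t : ℝ}
    (hW : ∀ i j, HasDerivAt (fun s => Wt s i j) (Wd i j) t) :
    HasDerivAt (fun s => ((Wt s * Lhalf)ᵀ * (Wt s * Lhalf)).trace)
      (2 * ((Wt t * Lhalf)ᵀ * (Wd * Lhalf)).trace) t := by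
  have hg : ∀ i j, HasDerivAt (fun s => ∑ k, Wt s i k * Lhalf k j) (∑ k, Wd i k * Lhalf k j) t :=
    fun i j => HasDerivAt.fun_sum fun k _ => (hW i k).mul_const (Lhalf k j)
  have H : HasDerivAt
      (fun s => ∑ j, ∑ i, (∑ k, Wt s i k * Lhalf k j) * (∑ k, Wt s i k * Lhalf k j))
      (∑ j, ∑ i, ((∑ k, Wd i k * Lhalf k j) * (∑ k, Wt t i k * Lhalf k j)
        + (∑ k, Wt t i k * Lhalf k j) * (∑ k, Wd i k * Lhalf k j))) t := by
    refine HasDerivAt.fun_sum fun j _ => HasDerivAt.fun_sum fun i _ => (hg i j).mul (hg i j)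
  have e1 : (fun s => ((Wt s * Lhalf)ᵀ * (Wt s * Lhalf)).trace)
      = fun s => ∑ j, ∑ i, (∑ k, Wt s i k * Lhalf k j) * (∑ k, Wt s i k * Lhalf k j) := by
    funext s
    simp only [Matrix.trace, Matrix.diag, Matrix.mul_apply, Matrix.transpose_apply]
  rw [e1]
  convert H using 1
  simp only [Matrix.trace, Matrix.diag, Matrix.mul_apply, Matrix.transpose_apply]
  rw [Finset.mul_sum]
  refine Finset.sum_congr rfl fun j _ => ?_
  rw [Finset.mul_sum]
  exact Finset.sum_congr rfl fun i _ => by ring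

private lemma quad_eigen_repr {n : ℕ} {A : Matrix (Fin n) (Fin n) ℝ}
    (hA : A.IsHermitian) (x : Fin n → ℝ) :
    ∃ y : Fin n → ℝ, (∑ i, y i ^ 2 = ∑ i, x i ^ 2) ∧
      x ⬝ᵥ (A *ᵥ x) = ∑ i, hA.eigenvalues i * y i ^ 2 := by
  classical
  set U : Matrix (Fin n) (Fin n) ℝ :=
    (Matrix.IsHermitian.eigenvectorUnitary hA : Matrix (Fin n) (Fin n) ℝ) with hU
  have hstar : star U = Uᵀ := by
    ext i j; simp [Matrix.star_apply]
  have hUU : U * Uᵀ = 1 := by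
    rw [← hstar]
    exact (Matrix.mem_unitaryGroup_iff).mp (Matrix.IsHermitian.eigenvectorUnitary hA).2
  refine ⟨Uᵀ *ᵥ x, ?_, ?_⟩
  · have h2 : (Uᵀ *ᵥ x) ⬝ᵥ (Uᵀ *ᵥ x) = x ⬝ᵥ x := by
      rw [Matrix.dotProduct_mulVec, Matrix.vecMul_transpose, Matrix.mulVec_mulVec, hUU,
        Matrix.one_mulVec]
    simpa [dotProduct, sq] using h2
  · have hspec := hA.spectral_theorem
    rw [Unitary.conjStarAlgAut_apply] at hspec
    have hdiag : (Matrix.diagonal (RCLike.ofReal ∘ hA.eigenvalues) : Matrix (Fin n) (Fin n) ℝ)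
        = Matrix.diagonal hA.eigenvalues := by congr 1
    conv_lhs => rw [hspec]
    rw [← hU, hstar, hdiag]
    rw [← Matrix.mulVec_mulVec, ← Matrix.mulVec_mulVec, Matrix.dotProduct_mulVec,
      ← Matrix.mulVec_transpose]
    simp only [dotProduct, Matrix.mulVec_diagonal, sq]
    exact Finset.sum_congr rfl fun i _ => by ring

private lemma quad_le_lamMax {n : ℕ} (hn : 0 < n) {A : Matrix (Fin n) (Fin n) ℝ}
    (hA : A.IsHermitian) (x : Fin n → ℝ) :
    lamMin hA * (∑ i, x i ^ 2) ≤ x ⬝ᵥ (A *ᵥ x) ∧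
      x ⬝ᵥ (A *ᵥ x) ≤ lamMax hA * (∑ i, x i ^ 2) := by
  haveI : Nonempty (Fin n) := ⟨⟨0, hn⟩⟩
  obtain ⟨y, hy, hrepr⟩ := quad_eigen_repr hA x
  have hbddB : BddBelow (Set.range hA.eigenvalues) := (Set.finite_range _).bddBelow
  have hbddA : BddAbove (Set.range hA.eigenvalues) := (Set.finite_range _).bddAbove
  constructor
  · rw [hrepr, ← hy, Finset.mul_sum]
    exact Finset.sum_le_sum fun i _ =>
      mul_le_mul_of_nonneg_right (ciInf_le hbddB i) (sq_nonneg _)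
  · rw [hrepr, ← hy, Finset.mul_sum]
    exact Finset.sum_le_sum fun i _ =>
      mul_le_mul_of_nonneg_right (le_ciSup hbddA i) (sq_nonneg _)

private lemma lamMin_pos {n : ℕ} (hn : 0 < n) {A : Matrix (Fin n) (Fin n) ℝ}
    (hA : A.PosDef) : 0 < lamMin hA.1 := by
  haveI : Nonempty (Fin n) := ⟨⟨0, hn⟩⟩
  have hmem : sInf (Set.range hA.1.eigenvalues) ∈ Set.range hA.1.eigenvalues :=
    Set.Nonempty.csInf_mem (Set.range_nonempty _) (Set.finite_range _)
  obtain ⟨i, hi⟩ := hmem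
  have : lamMin hA.1 = hA.1.eigenvalues i := hi.symm
  rw [this]
  exact hA.eigenvalues_pos i

private lemma lamMax_pos {n : ℕ} (hn : 0 < n) {A : Matrix (Fin n) (Fin n) ℝ}
    (hA : A.PosDef) : 0 < lamMax hA.1 := by
  haveI : Nonempty (Fin n) := ⟨⟨0, hn⟩⟩
  have hbddA : BddAbove (Set.range hA.1.eigenvalues) := (Set.finite_range _).bddAbove
  calc (0:ℝ) < hA.1.eigenvalues ⟨0, hn⟩ := hA.eigenvalues_pos _
  _ ≤ lamMax hA.1 := le_ciSup hbddA _

private lemma dot_symm {n : ℕ} {P : Matrix (Fin n) (Fin n) ℝ} (hP : Pᵀ = P)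
    (a b : Fin n → ℝ) : a ⬝ᵥ (P *ᵥ b) = b ⬝ᵥ (P *ᵥ a) := by
  have hPe : ∀ i j, P i j = P j i := fun i j => by
    conv_lhs => rw [← hP]
    rw [Matrix.transpose_apply]
  simp only [dotProduct, Matrix.mulVec, Finset.mul_sum]
  rw [Finset.sum_comm]
  exact Finset.sum_congr rfl fun i _ => Finset.sum_congr rfl fun j _ => by
    rw [hPe j i]; ring

private lemma young_quad {n : ℕ} {P : Matrix (Fin n) (Fin n) ℝ} (hP : P.PosDef)
    (hPt : Pᵀ = P) (a b : Fin n → ℝ) {ε : ℝ} (hε : 0 < ε) :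
    2 * (a ⬝ᵥ (P *ᵥ b)) ≤ ε * (a ⬝ᵥ (P *ᵥ a)) + ε⁻¹ * (b ⬝ᵥ (P *ᵥ b)) := by
  have hz : (0:ℝ) ≤ (ε • a - b) ⬝ᵥ (P *ᵥ (ε • a - b)) := by
    have := hP.posSemidef.dotProduct_mulVec_nonneg (ε • a - b)
    simpa only [star_trivial] using this
  rw [Matrix.mulVec_sub, Matrix.mulVec_smul, sub_dotProduct, smul_dotProduct,
    dotProduct_sub, dotProduct_sub, dotProduct_smul,
    dotProduct_smul] at hz
  have hsym : b ⬝ᵥ (P *ᵥ a) = a ⬝ᵥ (P *ᵥ b) := dot_symm hPt b a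
  rw [hsym] at hz
  simp only [smul_eq_mul] at hz
  have hz' : 0 ≤ ε * ε * (a ⬝ᵥ (P *ᵥ a)) - 2 * ε * (a ⬝ᵥ (P *ᵥ b)) + b ⬝ᵥ (P *ᵥ b) := by
    nlinarith [hz]
  have h2 := mul_nonneg (inv_pos.mpr hε).le hz'
  have heq : ε⁻¹ * (ε * ε * (a ⬝ᵥ (P *ᵥ a)) - 2 * ε * (a ⬝ᵥ (P *ᵥ b)) + b ⬝ᵥ (P *ᵥ b))
      = ε * (a ⬝ᵥ (P *ᵥ a)) - 2 * (a ⬝ᵥ (P *ᵥ b)) + ε⁻¹ * (b ⬝ᵥ (P *ᵥ b)) := by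
    field_simp
  rw [heq] at h2
  linarith

private lemma trace_mul_vecMulVec {N m : ℕ} (M : Matrix (Fin m) (Fin N) ℝ)
    (a : Fin N → ℝ) (b : Fin m → ℝ) :
    (M * Matrix.vecMulVec a b).trace = b ⬝ᵥ (M *ᵥ a) := by
  simp only [Matrix.trace, Matrix.diag, Matrix.mul_apply, Matrix.vecMulVec_apply,
    dotProduct, Matrix.mulVec, Finset.mul_sum]
  exact Finset.sum_congr rfl fun j _ => Finset.sum_congr rfl fun k _ => by ring

private lemma normF_nonneg {N m : ℕ} (W : Matrix (Fin N) (Fin m) ℝ) : 0 ≤ normF W :=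
  Real.sqrt_nonneg _

private lemma normF_sq {N m : ℕ} (W : Matrix (Fin N) (Fin m) ℝ) :
    normF W ^ 2 = ∑ i, ∑ j, W i j ^ 2 :=
  Real.sq_sqrt (Finset.sum_nonneg fun i _ => Finset.sum_nonneg fun j _ => sq_nonneg _)

private lemma trace_abs_le {N m : ℕ} (Lam : Matrix (Fin m) (Fin m) ℝ)
    (A B : Matrix (Fin N) (Fin m) ℝ) :
    |(Lam * (Aᵀ * B)).trace| ≤ normF Lam * (normF A * normF B) := by
  set M := Aᵀ * B with hM
  have h1 : |(Lam * M).trace| ≤ normF Lam * normF M := by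
    have htr : (Lam * M).trace = ∑ p : Fin m × Fin m, Lam p.1 p.2 * M p.2 p.1 := by
      rw [Fintype.sum_prod_type]
      simp [Matrix.trace, Matrix.diag, Matrix.mul_apply]
    have hcs := Finset.sum_mul_sq_le_sq_mul_sq Finset.univ
      (fun p : Fin m × Fin m => Lam p.1 p.2) (fun p : Fin m × Fin m => M p.2 p.1)
    have hL : ∑ p : Fin m × Fin m, Lam p.1 p.2 ^ 2 = normF Lam ^ 2 := by
      rw [normF_sq, Fintype.sum_prod_type]
    have hMn : ∑ p : Fin m × Fin m, M p.2 p.1 ^ 2 = normF M ^ 2 := by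
      rw [normF_sq, Fintype.sum_prod_type]
      rw [Finset.sum_comm]
    rw [htr]
    have habs : (∑ p : Fin m × Fin m, Lam p.1 p.2 * M p.2 p.1) ^ 2
        ≤ (normF Lam * normF M) ^ 2 := by
      rw [mul_pow]
      calc _ ≤ _ := hcs
      _ = _ := by rw [hL, hMn]
    exact abs_le.mpr (abs_le_of_sq_le_sq' habs (mul_nonneg (normF_nonneg _) (normF_nonneg _)))
  have h2 : normF M ≤ normF A * normF B := by
    have hsq : normF M ^ 2 ≤ (normF A * normF B) ^ 2 := by
      rw [normF_sq, mul_pow, normF_sq, normF_sq]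
      calc ∑ k, ∑ j, M k j ^ 2
          ≤ ∑ k, ∑ j, (∑ i, A i k ^ 2) * (∑ i, B i j ^ 2) := by
            refine Finset.sum_le_sum fun k _ => Finset.sum_le_sum fun j _ => ?_
            have hcs2 := Finset.sum_mul_sq_le_sq_mul_sq Finset.univ
              (fun i => A i k) (fun i => B i j)
            have hMe : M k j = ∑ i, A i k * B i j := by
              simp [hM, Matrix.mul_apply, Matrix.transpose_apply]
            rw [hMe]
            exact hcs2
        _ = (∑ k, ∑ i, A i k ^ 2) * (∑ j, ∑ i, B i j ^ 2) := by
            rw [Finset.sum_mul_sum]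
        _ = (∑ i, ∑ k, A i k ^ 2) * (∑ i, ∑ j, B i j ^ 2) := by
            rw [Finset.sum_comm]
            congr 1
            exact Finset.sum_comm
    have hb : 0 ≤ normF A * normF B := mul_nonneg (normF_nonneg _) (normF_nonneg _)
    exact (abs_le_of_sq_le_sq' hsq hb).2
  calc |(Lam * M).trace| ≤ normF Lam * normF M := h1
    _ ≤ normF Lam * (normF A * normF B) := mul_le_mul_of_nonneg_left h2 (normF_nonneg _)


set_option maxHeartbeats 1600000 in
theorem statement15
    {n N m : ℕ} (hn : 0 < n) (hN : 0 < N) (hm : 0 < m)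
    (Ar : Matrix (Fin n) (Fin n) ℝ) (B : Matrix (Fin n) (Fin m) ℝ)
    (Lam Lhalf : Matrix (Fin m) (Fin m) ℝ) (R P : Matrix (Fin n) (Fin n) ℝ)
    (hAr : Hurwitz Ar)
    (hLam : Lam.PosDef) (hLamDiag : Lam.IsDiag)
    (hLhalfDiag : Lhalf.IsDiag) (hLhalfSq : Lhalf * Lhalf = Lam)
    (hR : R.PosDef) (hP : P.PosDef)
    (hLyap : Arᵀ * P + P * Ar + R = 0)
    (γ κ η ξ : ℝ) (hγ : 0 < γ) (hκ : 0 < κ) (hη : 0 < η) (hξ0 : 0 < ξ) (hξ1 : ξ < 1)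
    (σx : ℝ → Fin N → ℝ)
    (W Wdot Wt U : ℝ → Matrix (Fin N) (Fin m) ℝ)
    (wdotmax wtilmax : ℝ)
    (hWder : ∀ t ≥ (0:ℝ), ∀ i j, HasDerivAt (fun s => W s i j) (Wdot t i j) t)
    (hWdotbnd : ∀ t ≥ (0:ℝ), normF (Wdot t) ≤ wdotmax)
    (hWtbnd : ∀ t ≥ (0:ℝ), normF (Wt t) ≤ wtilmax)
    (e eL xt : ℝ → Fin n → ℝ)
    (heL0 : eL 0 = 0) (hxt0 : xt 0 = 0)
    (he : ∀ t ≥ (0:ℝ), HasDerivAt e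
          (Ar *ᵥ e t - (B * Lam * (Wt t)ᵀ) *ᵥ σx t - κ • (e t - eL t)) t)
    (heL : ∀ t ≥ (0:ℝ), HasDerivAt eL (Ar *ᵥ eL t + η • (e t - eL t)) t)
    (hxt : ∀ t ≥ (0:ℝ), HasDerivAt xt (Ar *ᵥ xt t + κ • (e t - eL t)) t)
    (hWt : ∀ t ≥ (0:ℝ), ∀ i j, HasDerivAt (fun s => Wt s i j)
          (γ * U t i j - Wdot t i j) t)
    (hUproj : ∀ t ≥ (0:ℝ),
      ((Lam * (Wt t)ᵀ) * (U t - vecMulVec (σx t) ((e t) ᵥ* (P * B)))).trace ≤ 0)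
    : ∀ t ≥ (0:ℝ),
      deriv (fun s => Vstar γ κ η ξ P R hP.1 hR.1 Lhalf (e s) (Wt s) (eL s) (xt s)) t
        ≤ -(lamMin hR.1) * norm2 (e t) ^ 2
          - η⁻¹ * κ * lamMin hR.1 * norm2 (eL t) ^ 2
          - 2 * ξ * κ⁻¹ * lamMin hR.1 ^ 2 * (lamMax hP.1)⁻¹ * (1 - ξ) * norm2 (xt t) ^ 2
          + 2 * γ⁻¹ * normF Lam * wtilmax * wdotmax := by
  intro t ht
  -- basic symmetry facts
  have hPt : Pᵀ = P := by
    ext i j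
    have h := congrFun (congrFun hP.1 i) j
    simpa [Matrix.conjTranspose_apply] using h
  have hLt : Lhalfᵀ = Lhalf := by
    ext i j
    by_cases h : i = j
    · subst h; rfl
    · rw [Matrix.transpose_apply, hLhalfDiag (Ne.symm h), hLhalfDiag h]
  have hlamR0 : 0 < lamMin hR.1 := lamMin_pos hn hR
  have hlamP0 : 0 < lamMax hP.1 := lamMax_pos hn hP
  -- the derivative of V*
  have hWtd' : ∀ i j, HasDerivAt (fun s => Wt s i j) ((γ • U t - Wdot t) i j) t := by
    intro i j
    simpa [Matrix.sub_apply, Matrix.smul_apply, smul_eq_mul] using hWt t ht i j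
  have hD := (((hasDerivAt_quadForm P (he t ht)).fun_add
      ((hasDerivAt_traceQuad Lhalf hWtd').const_mul γ⁻¹)).fun_add
      ((hasDerivAt_quadForm P (heL t ht)).const_mul (η⁻¹ * κ))).fun_add
      ((hasDerivAt_quadForm P (hxt t ht)).const_mul
        (2 * ξ * κ⁻¹ * (lamMax hP.1)⁻¹ * lamMin hR.1))
  have hfun : (fun s => Vstar γ κ η ξ P R hP.1 hR.1 Lhalf (e s) (Wt s) (eL s) (xt s))
      = fun s => ((e s ⬝ᵥ (P *ᵥ e s) + γ⁻¹ * (((Wt s * Lhalf)ᵀ * (Wt s * Lhalf)).trace))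
        + η⁻¹ * κ * (eL s ⬝ᵥ (P *ᵥ eL s)))
        + 2 * ξ * κ⁻¹ * (lamMax hP.1)⁻¹ * lamMin hR.1 * (xt s ⬝ᵥ (P *ᵥ xt s)) := by
    funext s
    simp only [Vstar, Vlyap]
  rw [hfun, hD.deriv]
  -- notation for the pieces
  -- Lyapunov identity
  have hLyapNeg : Arᵀ * P + P * Ar = -R := by
    have h := hLyap
    rwa [add_eq_zero_iff_eq_neg] at h
  have hA : ∀ v : Fin n → ℝ, (Ar *ᵥ v) ⬝ᵥ (P *ᵥ v) + v ⬝ᵥ (P *ᵥ (Ar *ᵥ v))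
      = -(v ⬝ᵥ (R *ᵥ v)) := by
    intro v
    have h1 : v ⬝ᵥ ((Arᵀ * P) *ᵥ v) = (Ar *ᵥ v) ⬝ᵥ (P *ᵥ v) := by
      rw [← Matrix.mulVec_mulVec, Matrix.dotProduct_mulVec, Matrix.vecMul_transpose]
    have h2 : v ⬝ᵥ ((P * Ar) *ᵥ v) = v ⬝ᵥ (P *ᵥ (Ar *ᵥ v)) := by
      rw [← Matrix.mulVec_mulVec]
    have h3 : v ⬝ᵥ ((Arᵀ * P + P * Ar) *ᵥ v) = -(v ⬝ᵥ (R *ᵥ v)) := by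
      rw [hLyapNeg, Matrix.neg_mulVec, dotProduct_neg]
    rw [Matrix.add_mulVec, dotProduct_add, h1, h2] at h3
    linarith [h3]
  -- Term 1
  have hT1 : (Ar *ᵥ e t - (B * Lam * (Wt t)ᵀ) *ᵥ σx t - κ • (e t - eL t)) ⬝ᵥ (P *ᵥ e t)
      + e t ⬝ᵥ (P *ᵥ (Ar *ᵥ e t - (B * Lam * (Wt t)ᵀ) *ᵥ σx t - κ • (e t - eL t)))
      = -(e t ⬝ᵥ (R *ᵥ e t)) - 2 * (e t ⬝ᵥ (P *ᵥ ((B * Lam * (Wt t)ᵀ) *ᵥ σx t)))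
        - 2 * κ * (e t ⬝ᵥ (P *ᵥ (e t - eL t))) := by
    rw [Matrix.mulVec_sub, Matrix.mulVec_sub, Matrix.mulVec_smul]
    rw [sub_dotProduct, sub_dotProduct, smul_dotProduct,
      dotProduct_sub, dotProduct_sub, dotProduct_smul]
    rw [dot_symm hPt ((B * Lam * (Wt t)ᵀ) *ᵥ σx t) (e t), dot_symm hPt (e t - eL t) (e t)]
    simp only [smul_eq_mul]
    linarith [hA (e t)]
  -- Term 2
  have hT2 : (Ar *ᵥ eL t + η • (e t - eL t)) ⬝ᵥ (P *ᵥ eL t)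
      + eL t ⬝ᵥ (P *ᵥ (Ar *ᵥ eL t + η • (e t - eL t)))
      = -(eL t ⬝ᵥ (R *ᵥ eL t)) + 2 * η * (eL t ⬝ᵥ (P *ᵥ (e t - eL t))) := by
    rw [Matrix.mulVec_add, Matrix.mulVec_smul]
    rw [add_dotProduct, smul_dotProduct, dotProduct_add,
      dotProduct_smul]
    rw [dot_symm hPt (e t - eL t) (eL t)]
    simp only [smul_eq_mul]
    linarith [hA (eL t)]
  -- Term 3
  have hT3 : (Ar *ᵥ xt t + κ • (e t - eL t)) ⬝ᵥ (P *ᵥ xt t)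
      + xt t ⬝ᵥ (P *ᵥ (Ar *ᵥ xt t + κ • (e t - eL t)))
      = -(xt t ⬝ᵥ (R *ᵥ xt t)) + 2 * κ * (xt t ⬝ᵥ (P *ᵥ (e t - eL t))) := by
    rw [Matrix.mulVec_add, Matrix.mulVec_smul]
    rw [add_dotProduct, smul_dotProduct, dotProduct_add,
      dotProduct_smul]
    rw [dot_symm hPt (e t - eL t) (xt t)]
    simp only [smul_eq_mul]
    linarith [hA (xt t)]
  -- trace term
  have hTrX : ∀ X : Matrix (Fin N) (Fin m) ℝ,
      ((Wt t * Lhalf)ᵀ * (X * Lhalf)).trace = (Lam * ((Wt t)ᵀ * X)).trace := by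
    intro X
    rw [Matrix.transpose_mul, hLt]
    rw [show Lhalf * (Wt t)ᵀ * (X * Lhalf) = (Lhalf * ((Wt t)ᵀ * X)) * Lhalf by
      simp only [Matrix.mul_assoc]]
    rw [Matrix.trace_mul_comm, ← Matrix.mul_assoc, hLhalfSq]
  have htrV : ((Wt t * Lhalf)ᵀ * ((γ • U t - Wdot t) * Lhalf)).trace
      = γ * (Lam * ((Wt t)ᵀ * U t)).trace - (Lam * ((Wt t)ᵀ * Wdot t)).trace := by
    rw [hTrX]
    rw [Matrix.mul_sub, Matrix.mul_smul, Matrix.mul_sub, Matrix.mul_smul, Matrix.trace_sub,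
      Matrix.trace_smul, smul_eq_mul]
  have hγTr : γ⁻¹ * (2 * ((Wt t * Lhalf)ᵀ * ((γ • U t - Wdot t) * Lhalf)).trace)
      = 2 * (Lam * ((Wt t)ᵀ * U t)).trace
        - 2 * γ⁻¹ * (Lam * ((Wt t)ᵀ * Wdot t)).trace := by
    rw [htrV]
    field_simp
  -- projection bound
  have hTrUle : (Lam * ((Wt t)ᵀ * U t)).trace
      ≤ e t ⬝ᵥ (P *ᵥ ((B * Lam * (Wt t)ᵀ) *ᵥ σx t)) := by
    have hproj := hUproj t ht
    rw [Matrix.mul_sub, Matrix.trace_sub, sub_nonpos, Matrix.mul_assoc] at hproj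
    have hVtr : ((Lam * (Wt t)ᵀ) * Matrix.vecMulVec (σx t) ((e t) ᵥ* (P * B))).trace
        = e t ⬝ᵥ (P *ᵥ ((B * Lam * (Wt t)ᵀ) *ᵥ σx t)) := by
      rw [trace_mul_vecMulVec, ← Matrix.dotProduct_mulVec, Matrix.mulVec_mulVec,
        Matrix.mulVec_mulVec, show P * B * (Lam * (Wt t)ᵀ) = P * (B * Lam * (Wt t)ᵀ) from by
          simp only [Matrix.mul_assoc]]
    rw [hVtr] at hproj
    exact hproj
  -- trace Frobenius bound
  have hwt0 : 0 ≤ wtilmax := (normF_nonneg _).trans (hWtbnd t ht)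
  have hwd0 : 0 ≤ wdotmax := (normF_nonneg _).trans (hWdotbnd t ht)
  have hTrWlb : -(normF Lam * (wtilmax * wdotmax)) ≤ (Lam * ((Wt t)ᵀ * Wdot t)).trace := by
    have habs := trace_abs_le Lam (Wt t) (Wdot t)
    have hb : normF Lam * (normF (Wt t) * normF (Wdot t)) ≤ normF Lam * (wtilmax * wdotmax) :=
      mul_le_mul_of_nonneg_left
        (mul_le_mul (hWtbnd t ht) (hWdotbnd t ht) (normF_nonneg _) hwt0) (normF_nonneg _)
    have := neg_abs_le ((Lam * ((Wt t)ᵀ * Wdot t)).trace)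
    linarith
  have hTrWub : -(2 * γ⁻¹) * (Lam * ((Wt t)ᵀ * Wdot t)).trace
      ≤ 2 * γ⁻¹ * (normF Lam * (wtilmax * wdotmax)) := by
    have h2γ : (0:ℝ) ≤ 2 * γ⁻¹ := by positivity
    nlinarith [mul_le_mul_of_nonneg_left hTrWlb h2γ]
  -- quadratic form bounds
  have hn2 : ∀ v : Fin n → ℝ, norm2 v ^ 2 = ∑ i, v i ^ 2 := fun v =>
    Real.sq_sqrt (Finset.sum_nonneg fun i _ => sq_nonneg _)
  have hqe : lamMin hR.1 * norm2 (e t) ^ 2 ≤ e t ⬝ᵥ (R *ᵥ e t) := by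
    rw [hn2]; exact (quad_le_lamMax hn hR.1 (e t)).1
  have hqeL : lamMin hR.1 * norm2 (eL t) ^ 2 ≤ eL t ⬝ᵥ (R *ᵥ eL t) := by
    rw [hn2]; exact (quad_le_lamMax hn hR.1 (eL t)).1
  have hqxt : lamMin hR.1 * norm2 (xt t) ^ 2 ≤ xt t ⬝ᵥ (R *ᵥ xt t) := by
    rw [hn2]; exact (quad_le_lamMax hn hR.1 (xt t)).1
  have hxPx : xt t ⬝ᵥ (P *ᵥ xt t) ≤ lamMax hP.1 * norm2 (xt t) ^ 2 := by
    rw [hn2]; exact (quad_le_lamMax hn hP.1 (xt t)).2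
  -- splitting of the cross terms
  have hsplit : (e t - eL t) ⬝ᵥ (P *ᵥ (e t - eL t))
      = e t ⬝ᵥ (P *ᵥ (e t - eL t)) - eL t ⬝ᵥ (P *ᵥ (e t - eL t)) :=
    sub_dotProduct _ _ _
  have hsplitk : κ * ((e t - eL t) ⬝ᵥ (P *ᵥ (e t - eL t)))
      = κ * (e t ⬝ᵥ (P *ᵥ (e t - eL t))) - κ * (eL t ⬝ᵥ (P *ᵥ (e t - eL t))) := by
    rw [hsplit]; ring
  -- Young's inequality with ε = ξ λmin(R) / (κ λmax(P))
  have hε0 : 0 < ξ * lamMin hR.1 / (κ * lamMax hP.1) := by positivity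
  have hyoung := young_quad hP hPt (xt t) (e t - eL t) hε0
  -- multiplied inequalities
  have hc0 : (0:ℝ) ≤ 2 * ξ * κ⁻¹ * (lamMax hP.1)⁻¹ * lamMin hR.1 := by positivity
  have hc0κ : (0:ℝ) ≤ 2 * ξ * κ⁻¹ * (lamMax hP.1)⁻¹ * lamMin hR.1 * κ := by positivity
  have hmul1 : η⁻¹ * κ * (lamMin hR.1 * norm2 (eL t) ^ 2) ≤ η⁻¹ * κ * (eL t ⬝ᵥ (R *ᵥ eL t)) :=
    mul_le_mul_of_nonneg_left hqeL (by positivity)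
  have hmul2 : (2 * ξ * κ⁻¹ * (lamMax hP.1)⁻¹ * lamMin hR.1) * (lamMin hR.1 * norm2 (xt t) ^ 2)
      ≤ (2 * ξ * κ⁻¹ * (lamMax hP.1)⁻¹ * lamMin hR.1) * (xt t ⬝ᵥ (R *ᵥ xt t)) :=
    mul_le_mul_of_nonneg_left hqxt hc0
  have hmul3 := mul_le_mul_of_nonneg_left hyoung hc0κ
  have hmul4 : (2 * ξ * κ⁻¹ * (lamMax hP.1)⁻¹ * lamMin hR.1 * κ
        * (ξ * lamMin hR.1 / (κ * lamMax hP.1))) * (xt t ⬝ᵥ (P *ᵥ xt t))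
      ≤ (2 * ξ * κ⁻¹ * (lamMax hP.1)⁻¹ * lamMin hR.1 * κ
        * (ξ * lamMin hR.1 / (κ * lamMax hP.1))) * (lamMax hP.1 * norm2 (xt t) ^ 2) :=
    mul_le_mul_of_nonneg_left hxPx (by positivity)
  -- scalar identities
  have hid1 : 2 * ξ * κ⁻¹ * (lamMax hP.1)⁻¹ * lamMin hR.1 * κ
        * (ξ * lamMin hR.1 / (κ * lamMax hP.1))⁻¹ = 2 * κ := by
    field_simp
  have hid2 : (2 * ξ * κ⁻¹ * (lamMax hP.1)⁻¹ * lamMin hR.1 * κ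
        * (ξ * lamMin hR.1 / (κ * lamMax hP.1))) * (lamMax hP.1 * norm2 (xt t) ^ 2)
      = (2 * ξ * κ⁻¹ * (lamMax hP.1)⁻¹ * lamMin hR.1) * (lamMin hR.1 * norm2 (xt t) ^ 2)
        - 2 * ξ * κ⁻¹ * lamMin hR.1 ^ 2 * (lamMax hP.1)⁻¹ * (1 - ξ) * norm2 (xt t) ^ 2 := by
    field_simp
    ring
  -- expand the young-multiplied inequality
  have hexp : 2 * ξ * κ⁻¹ * (lamMax hP.1)⁻¹ * lamMin hR.1 * κ
        * ((ξ * lamMin hR.1 / (κ * lamMax hP.1)) * (xt t ⬝ᵥ (P *ᵥ xt t))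
          + (ξ * lamMin hR.1 / (κ * lamMax hP.1))⁻¹
            * ((e t - eL t) ⬝ᵥ (P *ᵥ (e t - eL t))))
      = (2 * ξ * κ⁻¹ * (lamMax hP.1)⁻¹ * lamMin hR.1 * κ
          * (ξ * lamMin hR.1 / (κ * lamMax hP.1))) * (xt t ⬝ᵥ (P *ᵥ xt t))
        + 2 * κ * ((e t - eL t) ⬝ᵥ (P *ᵥ (e t - eL t))) := by
    rw [mul_add, ← mul_assoc, ← mul_assoc, hid1]
  have hetaexp : η⁻¹ * κ * (-(eL t ⬝ᵥ (R *ᵥ eL t)) + 2 * η * (eL t ⬝ᵥ (P *ᵥ (e t - eL t))))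
      = -(η⁻¹ * κ * (eL t ⬝ᵥ (R *ᵥ eL t))) + 2 * κ * (eL t ⬝ᵥ (P *ᵥ (e t - eL t))) := by
    field_simp
  rw [hT1, hγTr, hT2, hT3, hetaexp]
  rw [hexp] at hmul3
  linarith [hTrUle, hTrWub, hqe, hmul1, hmul2, hmul3, hmul4, hsplitk, hid2]
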